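/- Let r ≥ 2, p ∈ [1,2], and f : (Z_r)^n → C^{m×m}, with Fourier coefficients f̂(S) = r^{-n} ∑_{x ∈ Z_r^n} f(x) ω^{-S·x} where ω = e^{2πi/r} and S·x = ∑_i S_i x_i mod r. Assuming the one-variable inequality (∑_{S ∈ Z_r} ζ^{|S|} ‖ĥ(S)‖_p^2 ≤ ((1/r) ∑_{x∈Z_r} ‖h(x)‖_p^p)^{2/p} for every h : Z_r → C^{m×m}, where ζ = ζ_r(p)), one has for all n: ∑_{S ∈ Z_r^n} ζ^{|S|} ‖f̂(S)‖_p^2 ≤ (r^{-n} ∑_{x ∈ Z_r^n} ‖f(x)‖_p^p)^{2/p}, where |S| = |{i : S_i ≠ 0}|. -/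

import Mathlib

open Matrix

/-- The Schatten `p`-norm of a complex `d × d` matrix. -/
noncomputable def schattenNorm {d : ℕ} (p : ℝ) (A : Matrix (Fin d) (Fin d) ℂ) : ℝ :=
  (∑ i, ((Matrix.isHermitian_conjTranspose_mul_self A).eigenvalues i) ^ (p / 2)) ^ (1 / p)

/-- The constant `ζ_r(p)`. -/
noncomputable def zetaConst (r : ℕ) (p : ℝ) : ℝ :=
  if p = 2 then 1 else (p - 1) * (1 - (p - 1) ^ (r - 1)) / (((r : ℝ) - 1) * (2 - p))

/-- Fourier coefficient of a matrix-valued function on `(ℤ_r)^n`: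
`f̂(S) = r^{-n} ∑_x f(x) ω^{-S·x}` with `ω = e^{2πi/r}`. -/
noncomputable def matFourier {r m n : ℕ} [NeZero r]
    (f : (Fin n → ZMod r) → Matrix (Fin m) (Fin m) ℂ) (S : Fin n → ZMod r) :
    Matrix (Fin m) (Fin m) ℂ :=
  (((r : ℂ) ^ n)⁻¹) •
    ∑ x : Fin n → ZMod r,
      (Complex.exp (2 * Real.pi * Complex.I / r) ^ (∑ i, (S i).val * (x i).val))⁻¹ • f x

/-- Hamming weight `|S| = |{i : S_i ≠ 0}|` of `S ∈ (ℤ_r)^n`. -/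
def hammingWt {r n : ℕ} [NeZero r] (S : Fin n → ZMod r) : ℕ :=
  (Finset.univ.filter fun i => S i ≠ 0).card

/-! ### Auxiliary lemmas -/

private lemma schattenNorm_nonneg' {d : ℕ} {p : ℝ} (A : Matrix (Fin d) (Fin d) ℂ) :
    0 ≤ schattenNorm p A := by
  apply Real.rpow_nonneg
  exact Finset.sum_nonneg fun i _ =>
    Real.rpow_nonneg (Matrix.eigenvalues_conjTranspose_mul_self_nonneg A i) _

private lemma zetaConst_nonneg' {r : ℕ} {p : ℝ} (hr : 2 ≤ r) (hp1 : 1 ≤ p) (hp2 : p ≤ 2) :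
    0 ≤ zetaConst r p := by
  unfold zetaConst
  split
  · norm_num
  · next h =>
    have hp2' : p < 2 := lt_of_le_of_ne hp2 h
    apply div_nonneg
    · apply mul_nonneg (by linarith)
      have : (p - 1) ^ (r - 1) ≤ 1 := pow_le_one₀ (by linarith) (by linarith)
      linarith
    · apply mul_nonneg
      · have : (2:ℝ) ≤ (r:ℝ) := by exact_mod_cast hr
        linarith
      · linarith

private lemma hammingWt_eq_sum' {r n : ℕ} [NeZero r] (S : Fin n → ZMod r) :
    hammingWt S = ∑ i, if S i ≠ 0 then 1 else 0 := by
  rw [hammingWt, Finset.card_filter]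

private lemma hammingWt_cons' {r n : ℕ} [NeZero r] (s : ZMod r) (S : Fin n → ZMod r) :
    hammingWt (Fin.cons s S) = hammingWt (fun _ : Fin 1 => s) + hammingWt S := by
  simp [hammingWt_eq_sum', Fin.sum_univ_succ]

private lemma minkowski_aux' {ι κ : Type*} [Fintype ι] {q : ℝ} (hq : 1 ≤ q)
    (u : κ → ι → ℝ) (hu : ∀ k i, 0 ≤ u k i) (t : Finset κ) :
    (∑ i, (∑ k ∈ t, u k i) ^ q) ^ (1/q) ≤ ∑ k ∈ t, (∑ i, u k i ^ q) ^ (1/q) := by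
  have hq0 : q ≠ 0 := by positivity
  induction t using Finset.cons_induction with
  | empty => simp [Real.zero_rpow hq0, Real.zero_rpow (inv_ne_zero hq0)]
  | cons a t ha ih =>
    simp only [Finset.sum_cons]
    have h1 : (∑ i, (u a i + ∑ k ∈ t, u k i) ^ q) ^ (1/q)
        ≤ (∑ i, u a i ^ q) ^ (1/q) + (∑ i, (∑ k ∈ t, u k i) ^ q) ^ (1/q) := by
      have h := Real.Lp_add_le Finset.univ (fun i => u a i) (fun i => ∑ k ∈ t, u k i) hq
      have e1 : ∀ i : ι, |u a i + ∑ k ∈ t, u k i| = u a i + ∑ k ∈ t, u k i := fun i =>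
        abs_of_nonneg (add_nonneg (hu a i) (Finset.sum_nonneg fun k _ => hu k i))
      have e2 : ∀ i : ι, |u a i| = u a i := fun i => abs_of_nonneg (hu a i)
      have e3 : ∀ i : ι, |∑ k ∈ t, u k i| = ∑ k ∈ t, u k i := fun i =>
        abs_of_nonneg (Finset.sum_nonneg fun k _ => hu k i)
      simpa only [e1, e2, e3] using h
    exact h1.trans (add_le_add (le_refl _) ih)

private lemma minkowski_sum' {ι κ : Type*} [Fintype ι] [Fintype κ] {q : ℝ} (hq : 1 ≤ q)
    (u : κ → ι → ℝ) (hu : ∀ k i, 0 ≤ u k i) :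
    ∑ i, (∑ k, u k i) ^ q ≤ (∑ k, (∑ i, u k i ^ q) ^ (1/q)) ^ q := by
  have hq0 : q ≠ 0 := by positivity
  have h0 : 0 ≤ ∑ i, (∑ k, u k i) ^ q :=
    Finset.sum_nonneg fun i _ =>
      Real.rpow_nonneg (Finset.sum_nonneg fun k _ => hu k i) _
  calc ∑ i, (∑ k, u k i) ^ q
      = ((∑ i, (∑ k, u k i) ^ q) ^ (1/q)) ^ q := by
        rw [one_div, Real.rpow_inv_rpow h0 hq0]
    _ ≤ (∑ k, (∑ i, u k i ^ q) ^ (1/q)) ^ q :=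
        Real.rpow_le_rpow (Real.rpow_nonneg h0 _)
          (minkowski_aux' hq u hu Finset.univ) (by positivity)

private lemma matFourier_cons' {r m n : ℕ} [NeZero r]
    (f : (Fin (n+1) → ZMod r) → Matrix (Fin m) (Fin m) ℂ) (s : ZMod r) (S : Fin n → ZMod r) :
    matFourier f (Fin.cons s S) =
      matFourier (fun v : Fin 1 → ZMod r =>
        matFourier (fun x => f (Fin.cons (v 0) x)) S) (fun _ => s) := by
  unfold matFourier
  set ω := Complex.exp (2 * Real.pi * Complex.I / r) with hω
  have lhs_eq :
      ∑ z : Fin (n+1) → ZMod r,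
          (ω ^ (∑ i, ((Fin.cons s S : Fin (n+1) → ZMod r) i).val * (z i).val))⁻¹ • f z
        = ∑ y : ZMod r, ∑ x : Fin n → ZMod r,
            ((ω ^ (s.val * y.val))⁻¹ * (ω ^ (∑ i, (S i).val * (x i).val))⁻¹) •
              f (Fin.cons y x) := by
    rw [← Equiv.sum_comp (Fin.consEquiv (fun _ : Fin (n+1) => ZMod r))
      (fun z => (ω ^ (∑ i, ((Fin.cons s S : Fin (n+1) → ZMod r) i).val * (z i).val))⁻¹ • f z),
      Fintype.sum_prod_type]
    apply Finset.sum_congr rfl; intro y _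
    apply Finset.sum_congr rfl; intro x _
    have hexp : (∑ i, ((Fin.cons s S : Fin (n+1) → ZMod r) i).val
          * ((Fin.cons y x : Fin (n+1) → ZMod r) i).val)
        = s.val * y.val + ∑ i, (S i).val * (x i).val := by
      rw [Fin.sum_univ_succ]; simp
    simp only [Fin.consEquiv_apply, hexp, pow_add, mul_inv]
    rfl
  rw [lhs_eq]
  rw [Fintype.sum_equiv (Equiv.funUnique (Fin 1) (ZMod r)) _
    (fun y : ZMod r =>
      (ω ^ (s.val * y.val))⁻¹ •
        (((r:ℂ) ^ n)⁻¹ • ∑ x : Fin n → ZMod r,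
          (ω ^ (∑ i, (S i).val * (x i).val))⁻¹ • f (Fin.cons y x)))]
  · simp only [Finset.smul_sum, smul_smul]
    rw [pow_succ]
    apply Finset.sum_congr rfl; intro y _
    apply Finset.sum_congr rfl; intro x _
    congr 1
    rw [mul_inv]
    ring
  · intro v
    have h1 : (∑ i : Fin 1, ((fun _ : Fin 1 => s) i).val * (v i).val) = s.val * (v 0).val := by
      simp
    rw [h1]
    congr 1

/-- The matrix-valued hypercontractive inequality over `ℤ_r`: assuming the
one-variable (`n = 1`) case, for all `n` and all `f : (ℤ_r)^n → ℂ^{m×m}`,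
`∑_S ζ^{|S|} ‖f̂(S)‖_p² ≤ (r^{-n} ∑_x ‖f(x)‖_p^p)^{2/p}` where `ζ = ζ_r(p)`. -/
theorem matrix_hypercontractivity_induction (r m : ℕ) [NeZero r] (hr : 2 ≤ r)
    (p : ℝ) (hp1 : 1 ≤ p) (hp2 : p ≤ 2)
    (base : ∀ h : (Fin 1 → ZMod r) → Matrix (Fin m) (Fin m) ℂ,
      ∑ S : Fin 1 → ZMod r, zetaConst r p ^ hammingWt S * schattenNorm p (matFourier h S) ^ 2
        ≤ ((1 / (r : ℝ)) * ∑ x : Fin 1 → ZMod r, schattenNorm p (h x) ^ p) ^ (2 / p)) :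
    ∀ (n : ℕ) (f : (Fin n → ZMod r) → Matrix (Fin m) (Fin m) ℂ),
      ∑ S : Fin n → ZMod r, zetaConst r p ^ hammingWt S * schattenNorm p (matFourier f S) ^ 2
        ≤ ((((r : ℝ) ^ n)⁻¹) * ∑ x : Fin n → ZMod r, schattenNorm p (f x) ^ p) ^ (2 / p) := by
  have hp0 : (0:ℝ) < p := by linarith
  have hpne : p ≠ 0 := ne_of_gt hp0
  have hq1 : (1:ℝ) ≤ 2 / p := by rw [le_div_iff₀ hp0]; linarith
  have hq0 : (2:ℝ) / p ≠ 0 := by positivity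
  have hpq : p * (2 / p) = 2 := by field_simp
  have hpd : p / 2 * (2 / p) = 1 := by field_simp
  have hZ : 0 ≤ zetaConst r p := zetaConst_nonneg' hr hp1 hp2
  have hrR : (0:ℝ) < (r:ℝ) := by
    have := Nat.pos_of_ne_zero (NeZero.ne r)
    exact_mod_cast this
  have hcancel : ∀ x : ℝ, 0 ≤ x → (x ^ (p/2)) ^ (2/p) = x := by
    intro x hx
    rw [← Real.rpow_mul hx, hpd, Real.rpow_one]
  intro n
  induction n with
  | zero =>
    intro f
    have hF : ∀ S : Fin 0 → ZMod r, matFourier f S = f S := by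
      intro S
      unfold matFourier
      rw [Fintype.sum_unique]
      simp only [Finset.univ_eq_empty, Finset.sum_empty, pow_zero, inv_one, one_smul]
      exact congrArg f (Subsingleton.elim _ _)
    have hw : ∀ S : Fin 0 → ZMod r, hammingWt S = 0 := by
      intro S; simp [hammingWt]
    rw [Fintype.sum_unique
      (fun S : Fin 0 → ZMod r =>
        zetaConst r p ^ hammingWt S * schattenNorm p (matFourier f S) ^ 2),
      Fintype.sum_unique (fun x : Fin 0 → ZMod r => schattenNorm p (f x) ^ p),
      hF, hw, pow_zero, pow_zero, inv_one, one_mul, one_mul]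
    have key : ∀ A : Matrix (Fin m) (Fin m) ℂ,
        (schattenNorm p A ^ p) ^ (2/p) = schattenNorm p A ^ (2:ℕ) := by
      intro A
      rw [← Real.rpow_mul (schattenNorm_nonneg' A), hpq]
      rw [show ((2:ℝ) = ((2:ℕ):ℝ)) by norm_num, Real.rpow_natCast]
    exact le_of_eq (key _).symm
  | succ n IH =>
    intro f
    set Z := zetaConst r p with hZdef
    set H : (Fin n → ZMod r) → (Fin 1 → ZMod r) → Matrix (Fin m) (Fin m) ℂ :=
      fun S' v => matFourier (fun x => f (Fin.cons (v 0) x)) S' with hHdef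
    set a : (Fin n → ZMod r) → ZMod r → ℝ :=
      fun S' y => schattenNorm p (H S' (fun _ => y)) with hadef
    have ha : ∀ S' y, 0 ≤ a S' y := fun S' y => schattenNorm_nonneg' _
    set u : ZMod r → (Fin n → ZMod r) → ℝ := fun y S' =>
      (1/(r:ℝ)) * ((Z ^ hammingWt S') ^ (p/2) * a S' y ^ p) with hudef
    have hu : ∀ y S', 0 ≤ u y S' := fun y S' =>
      mul_nonneg (by positivity)
        (mul_nonneg (Real.rpow_nonneg (pow_nonneg hZ _) _) (Real.rpow_nonneg (ha _ _) _))
    set T : ZMod r → ℝ := fun y =>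
      ((r:ℝ) ^ n)⁻¹ * ∑ x : Fin n → ZMod r, schattenNorm p (f (Fin.cons y x)) ^ p with hTdef
    have hT : ∀ y, 0 ≤ T y := fun y =>
      mul_nonneg (by positivity)
        (Finset.sum_nonneg fun x _ => Real.rpow_nonneg (schattenNorm_nonneg' _) _)
    -- Step 1 : rewrite the LHS as a double sum
    have step1 :
        (∑ S : Fin (n+1) → ZMod r, Z ^ hammingWt S * schattenNorm p (matFourier f S) ^ 2)
          = ∑ S' : Fin n → ZMod r, Z ^ hammingWt S' *
              ∑ v : Fin 1 → ZMod r, Z ^ hammingWt v *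
                schattenNorm p (matFourier (H S') v) ^ 2 := by
      rw [← Equiv.sum_comp (Fin.consEquiv (fun _ : Fin (n+1) => ZMod r))
        (fun S => Z ^ hammingWt S * schattenNorm p (matFourier f S) ^ 2),
        Fintype.sum_prod_type, Finset.sum_comm]
      apply Finset.sum_congr rfl; intro S' _
      rw [Finset.mul_sum]
      rw [← Equiv.sum_comp (Equiv.funUnique (Fin 1) (ZMod r)).symm
        (fun v : Fin 1 → ZMod r => Z ^ hammingWt S' *
          (Z ^ hammingWt v * schattenNorm p (matFourier (H S') v) ^ 2))]
      apply Finset.sum_congr rfl; intro y _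
      show Z ^ hammingWt (Fin.cons y S') * schattenNorm p (matFourier f (Fin.cons y S')) ^ 2
        = Z ^ hammingWt S' * (Z ^ hammingWt (fun _ : Fin 1 => y) *
            schattenNorm p (matFourier (H S') (fun _ => y)) ^ 2)
      rw [hammingWt_cons', matFourier_cons', pow_add]
      show Z ^ hammingWt (fun _ : Fin 1 => y) * Z ^ hammingWt S' *
          schattenNorm p (matFourier (H S') (fun _ => y)) ^ 2 = _
      ring
    -- Step 2 : apply the base case to each inner sum
    have step2 : ∀ S' : Fin n → ZMod r,
        (∑ v : Fin 1 → ZMod r, Z ^ hammingWt v * schattenNorm p (matFourier (H S') v) ^ 2)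
          ≤ ((1/(r:ℝ)) * ∑ y : ZMod r, a S' y ^ p) ^ (2/p) := by
      intro S'
      have hb := base (H S')
      have hrw : ∑ x : Fin 1 → ZMod r, schattenNorm p (H S' x) ^ p
          = ∑ y : ZMod r, a S' y ^ p := by
        rw [← Equiv.sum_comp (Equiv.funUnique (Fin 1) (ZMod r)).symm
          (fun v : Fin 1 → ZMod r => schattenNorm p (H S' v) ^ p)]
        rfl
      rw [hrw] at hb
      exact hb
    -- Step 3 : pull the weight inside the rpow
    have step3 : ∀ S' : Fin n → ZMod r,
        Z ^ hammingWt S' * ((1/(r:ℝ)) * ∑ y : ZMod r, a S' y ^ p) ^ (2/p)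
          = (∑ y : ZMod r, u y S') ^ (2/p) := by
      intro S'
      have hsum : ∑ y : ZMod r, u y S'
          = (Z ^ hammingWt S') ^ (p/2) * ((1/(r:ℝ)) * ∑ y : ZMod r, a S' y ^ p) := by
        rw [Finset.mul_sum, Finset.mul_sum]
        apply Finset.sum_congr rfl; intro y _
        simp only [hudef]
        ring
      have hX : 0 ≤ (1/(r:ℝ)) * ∑ y : ZMod r, a S' y ^ p :=
        mul_nonneg (by positivity)
          (Finset.sum_nonneg fun y _ => Real.rpow_nonneg (ha _ _) _)
      rw [hsum, Real.mul_rpow (Real.rpow_nonneg (pow_nonneg hZ _) _) hX,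
        hcancel _ (pow_nonneg hZ _)]
    -- Step 5 : bound each `ℓ^q`-norm term via the inductive hypothesis
    have step5 : ∀ y : ZMod r,
        (∑ S' : Fin n → ZMod r, u y S' ^ (2/p)) ^ (1/(2/p)) ≤ (1/(r:ℝ)) * T y := by
      intro y
      have e2 : ∀ S' : Fin n → ZMod r,
          u y S' ^ (2/p) = (1/(r:ℝ)) ^ (2/p) * (Z ^ hammingWt S' * a S' y ^ (2:ℕ)) := by
        intro S'
        have h1 : (0:ℝ) ≤ (Z ^ hammingWt S') ^ (p/2) := Real.rpow_nonneg (pow_nonneg hZ _) _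
        have h2 : (0:ℝ) ≤ a S' y ^ p := Real.rpow_nonneg (ha _ _) _
        simp only [hudef]
        rw [Real.mul_rpow (by positivity) (mul_nonneg h1 h2), Real.mul_rpow h1 h2,
          hcancel _ (pow_nonneg hZ _), ← Real.rpow_mul (ha _ _), hpq,
          show ((2:ℝ) = ((2:ℕ):ℝ)) by norm_num, Real.rpow_natCast]
      have hIH := IH (fun x => f (Fin.cons y x))
      have hIH' : ∑ S' : Fin n → ZMod r, Z ^ hammingWt S' * a S' y ^ (2:ℕ) ≤ T y ^ (2/p) := by
        simpa only [hadef, hHdef, hTdef] using hIH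
      have hsum2 : ∑ S' : Fin n → ZMod r, u y S' ^ (2/p)
          = (1/(r:ℝ)) ^ (2/p) * ∑ S' : Fin n → ZMod r, Z ^ hammingWt S' * a S' y ^ (2:ℕ) := by
        rw [Finset.mul_sum]
        exact Finset.sum_congr rfl fun S' _ => e2 S'
      rw [hsum2]
      have hle : (1/(r:ℝ)) ^ (2/p) * ∑ S' : Fin n → ZMod r, Z ^ hammingWt S' * a S' y ^ (2:ℕ)
          ≤ (1/(r:ℝ)) ^ (2/p) * T y ^ (2/p) :=
        mul_le_mul_of_nonneg_left hIH' (Real.rpow_nonneg (by positivity) _)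
      have hfin : ((1/(r:ℝ)) ^ (2/p) * T y ^ (2/p)) ^ (1/(2/p)) = (1/(r:ℝ)) * T y := by
        rw [← Real.mul_rpow (by positivity) (hT y), one_div (2/p),
          Real.rpow_rpow_inv (mul_nonneg (by positivity) (hT y)) hq0]
      calc ((1/(r:ℝ)) ^ (2/p) * ∑ S' : Fin n → ZMod r,
              Z ^ hammingWt S' * a S' y ^ (2:ℕ)) ^ (1/(2/p))
          ≤ ((1/(r:ℝ)) ^ (2/p) * T y ^ (2/p)) ^ (1/(2/p)) := by
            apply Real.rpow_le_rpow _ hle (by positivity)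
            exact mul_nonneg (Real.rpow_nonneg (by positivity) _)
              (Finset.sum_nonneg fun S' _ =>
                mul_nonneg (pow_nonneg hZ _) (pow_nonneg (ha _ _) _))
        _ = (1/(r:ℝ)) * T y := hfin
    -- Step 6 : identify the final sum with the RHS
    have step6 : ∑ y : ZMod r, (1/(r:ℝ)) * T y
        = (((r:ℝ) ^ (n+1))⁻¹) * ∑ z : Fin (n+1) → ZMod r, schattenNorm p (f z) ^ p := by
      rw [← Equiv.sum_comp (Fin.consEquiv (fun _ : Fin (n+1) => ZMod r))
        (fun z => schattenNorm p (f z) ^ p), Fintype.sum_prod_type, Finset.mul_sum]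
      apply Finset.sum_congr rfl; intro y _
      simp only [hTdef]
      rw [Finset.mul_sum, Finset.mul_sum, Finset.mul_sum]
      apply Finset.sum_congr rfl; intro x _
      have : schattenNorm p (f ((Fin.consEquiv (fun _ : Fin (n+1) => ZMod r)) (y, x))) ^ p
          = schattenNorm p (f (Fin.cons y x)) ^ p := rfl
      rw [this, pow_succ, mul_inv]
      ring
    -- Assemble
    calc ∑ S : Fin (n+1) → ZMod r, Z ^ hammingWt S * schattenNorm p (matFourier f S) ^ 2
        = ∑ S' : Fin n → ZMod r, Z ^ hammingWt S' *
            ∑ v : Fin 1 → ZMod r, Z ^ hammingWt v *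
              schattenNorm p (matFourier (H S') v) ^ 2 := step1
      _ ≤ ∑ S' : Fin n → ZMod r, (∑ y : ZMod r, u y S') ^ (2/p) := by
          apply Finset.sum_le_sum
          intro S' _
          rw [← step3 S']
          exact mul_le_mul_of_nonneg_left (step2 S') (pow_nonneg hZ _)
      _ ≤ (∑ y : ZMod r, (∑ S' : Fin n → ZMod r, u y S' ^ (2/p)) ^ (1/(2/p))) ^ (2/p) :=
          minkowski_sum' hq1 u hu
      _ ≤ (∑ y : ZMod r, (1/(r:ℝ)) * T y) ^ (2/p) := by
          apply Real.rpow_le_rpow _ (Finset.sum_le_sum fun y _ => step5 y) (by positivity)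
          exact Finset.sum_nonneg fun y _ =>
            Real.rpow_nonneg (Finset.sum_nonneg fun S' _ => Real.rpow_nonneg (hu y S') _) _
      _ = ((((r:ℝ) ^ (n+1))⁻¹) *
            ∑ z : Fin (n+1) → ZMod r, schattenNorm p (f z) ^ p) ^ (2/p) := by
          rw [step6]
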